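/- Under the Setup: if v_i ∈ e_1 ∩ U for some 1 ≤ i ≤ t−1, then N_H(e_i ∖ U) ⊆ F ∖ {e_t}; and if v_{j−1} ∈ e_t ∩ U for some 2 ≤ j ≤ t−1, then N_H(e_j ∖ U) ⊆ F ∖ {e_1}. -/

import Mathlib

namespace BergeM

def MIsBergePath {n : ℕ} (E : Multiset (Finset (Fin n))) (k : ℕ)
    (v : Fin (k + 1) → Fin n) (f : Fin k → Finset (Fin n)) : Prop :=
  Function.Injective v ∧ (↑(List.ofFn f) : Multiset (Finset (Fin n))) ≤ E ∧
    ∀ i : Fin k, v i.castSucc ∈ f i ∧ v i.succ ∈ f i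

def MHasBergePath {n : ℕ} (E : Multiset (Finset (Fin n))) (k : ℕ) : Prop :=
  ∃ v f, MIsBergePath E k v f

def MBPFree {n : ℕ} (E : Multiset (Finset (Fin n))) (k : ℕ) : Prop :=
  ¬ MHasBergePath E k

def MConnected {n : ℕ} (E : Multiset (Finset (Fin n))) : Prop :=
  ∀ x y : Fin n, ∃ (k : ℕ) (v : Fin (k + 1) → Fin n) (f : Fin k → Finset (Fin n)),
    MIsBergePath E k v f ∧ (∃ i, v i = x) ∧ (∃ i, v i = y)

def MUniform {n : ℕ} (E : Multiset (Finset (Fin n))) (r : ℕ) : Prop :=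
  ∀ e ∈ E, e.card = r

def MIsBergeCycle {n : ℕ} (E : Multiset (Finset (Fin n))) (k : ℕ)
    (v : Fin k → Fin n) (f : Fin k → Finset (Fin n)) : Prop :=
  Function.Injective v ∧ (↑(List.ofFn f) : Multiset (Finset (Fin n))) ≤ E ∧
    ∀ i : Fin k, v i ∈ f i ∧ v ⟨(i.val + 1) % k, Nat.mod_lt _ i.pos⟩ ∈ f i

def MHasBergeCycle {n : ℕ} (E : Multiset (Finset (Fin n))) (k : ℕ) : Prop :=
  ∃ v f, MIsBergeCycle E k v f

def edgeNbhd {n : ℕ} (E : Multiset (Finset (Fin n))) (S : Finset (Fin n)) :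
    Multiset (Finset (Fin n)) :=
  E.filter fun e => (e ∩ S).Nonempty


private lemma ofFn_val_eq {α : Type*} {k : ℕ} (Fe : ℕ → α) :
    List.ofFn (fun i : Fin k => Fe i.val) = (List.range k).map Fe := by
  apply List.ext_getElem <;> simp

lemma path_of_nat {n : ℕ} (E : Multiset (Finset (Fin n))) (k : ℕ)
    (V : ℕ → Fin n) (Fe : ℕ → Finset (Fin n))
    (hinj : ∀ a ≤ k, ∀ b ≤ k, V a = V b → a = b)
    (hle : (↑((List.range k).map Fe) : Multiset (Finset (Fin n))) ≤ E)
    (hadj : ∀ m < k, V m ∈ Fe m ∧ V (m + 1) ∈ Fe m) :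
    MHasBergePath E k := by
  refine ⟨fun i => V i.val, fun i => Fe i.val, ?_, ?_, ?_⟩
  · intro a b h
    exact Fin.ext (hinj a.val (by omega) b.val (by omega) h)
  · rw [ofFn_val_eq]; exact hle
  · intro i
    simpa using hadj i.val i.isLt

lemma cycle_of_nat {n : ℕ} (E : Multiset (Finset (Fin n))) (k : ℕ)
    (V : ℕ → Fin n) (Fe : ℕ → Finset (Fin n))
    (hinj : ∀ a < k, ∀ b < k, V a = V b → a = b)
    (hle : (↑((List.range k).map Fe) : Multiset (Finset (Fin n))) ≤ E)
    (hadj : ∀ m < k, V m ∈ Fe m ∧ V ((m + 1) % k) ∈ Fe m) :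
    MHasBergeCycle E k := by
  refine ⟨fun i => V i.val, fun i => Fe i.val, ?_, ?_, ?_⟩
  · intro a b h
    exact Fin.ext (hinj a.val a.isLt b.val b.isLt h)
  · rw [ofFn_val_eq]; exact hle
  · intro i
    simpa using hadj i.val i.isLt

lemma path_zero {n : ℕ} (E : Multiset (Finset (Fin n))) (x : Fin n) : MHasBergePath E 0 :=
  ⟨fun _ => x, Fin.elim0, fun a b _ => Fin.ext (by omega), by simp, fun i => i.elim0⟩

lemma path_trunc {n : ℕ} (E : Multiset (Finset (Fin n))) {a b : ℕ} (hab : a ≤ b)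
    (h : MHasBergePath E b) : MHasBergePath E a := by
  obtain ⟨pv, pf, pinj, ple, padj⟩ := h
  rcases Nat.eq_zero_or_pos a with rfl | ha
  · exact path_zero E (pv 0)
  · have hb : 0 < b := lt_of_lt_of_le ha hab
    apply path_of_nat E a (fun m => pv ⟨m % (b + 1), Nat.mod_lt _ (Nat.succ_pos b)⟩)
      (fun m => pf ⟨m % b, Nat.mod_lt _ hb⟩)
    · intro x hx y hy hxy
      have hval : x % (b + 1) = y % (b + 1) := congrArg Fin.val (pinj hxy)
      have e1 : x % (b + 1) = x := Nat.mod_eq_of_lt (by omega)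
      have e2 : y % (b + 1) = y := Nat.mod_eq_of_lt (by omega)
      omega
    · have hofn : List.ofFn pf = (List.range b).map (fun m => pf ⟨m % b, Nat.mod_lt _ hb⟩) := by
        apply List.ext_getElem
        · simp
        · intro j h1 h2
          have hj : j < b := by simpa using h1
          simp only [List.getElem_ofFn, List.getElem_map, List.getElem_range]
          congr 1
          exact Fin.ext (by simp [Nat.mod_eq_of_lt hj])
      calc (↑((List.range a).map (fun m => pf ⟨m % b, Nat.mod_lt _ hb⟩)) : Multiset (Finset (Fin n)))
          ≤ ↑((List.range b).map (fun m => pf ⟨m % b, Nat.mod_lt _ hb⟩)) := by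
            exact Multiset.coe_le.mpr ((List.Sublist.map _ (List.range_sublist.mpr hab)).subperm)
        _ = ↑(List.ofFn pf) := by rw [hofn]
        _ ≤ E := ple
    · intro m hm
      have hmb : m < b := by omega
      have h0 := padj ⟨m, hmb⟩
      have e1 : (⟨m % (b + 1), Nat.mod_lt _ (Nat.succ_pos b)⟩ : Fin (b + 1)) = (⟨m, hmb⟩ : Fin b).castSucc :=
        Fin.ext (by simp [Nat.mod_eq_of_lt (show m < b + 1 by omega)])
      have e2 : (⟨(m + 1) % (b + 1), Nat.mod_lt _ (Nat.succ_pos b)⟩ : Fin (b + 1)) = (⟨m, hmb⟩ : Fin b).succ :=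
        Fin.ext (by simp [Nat.mod_eq_of_lt (show m + 1 < b + 1 by omega)])
      have e3 : (⟨m % b, Nat.mod_lt _ hb⟩ : Fin b) = ⟨m, hmb⟩ := Fin.ext (by simp [Nat.mod_eq_of_lt hmb])
      rw [e1, e2, e3]
      exact h0

lemma coe_map_range (b : ℕ) {c : ℕ} (τ : ℕ → ℕ)
    (h1 : ∀ m < c, b ≤ τ m ∧ τ m < b + c)
    (h2 : ∀ x < c, ∀ y < c, τ x = τ y → x = y) :
    (↑((List.range c).map τ) : Multiset ℕ) = ↑((List.range c).map (fun m => m + b)) := by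
  apply Multiset.eq_of_le_of_card_le
  · have hnd : ((List.range c).map τ).Nodup := by
      refine List.Nodup.map_on ?_ List.nodup_range
      intro x hx y hy hxy
      rw [List.mem_range] at hx hy
      exact h2 x hx y hy hxy
    rw [Multiset.le_iff_subset (by exact hnd)]
    intro x hx
    simp only [Multiset.mem_coe, List.mem_map, List.mem_range] at hx ⊢
    obtain ⟨m, hm, rfl⟩ := hx
    have := h1 m hm
    exact ⟨τ m - b, by omega, by omega⟩
  · simp

lemma coe_map_range_e {n : ℕ} (e : ℕ → Finset (Fin n)) (b : ℕ) {c : ℕ} (τ : ℕ → ℕ)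
    (h1 : ∀ m < c, b ≤ τ m ∧ τ m < b + c)
    (h2 : ∀ x < c, ∀ y < c, τ x = τ y → x = y) :
    (↑((List.range c).map (fun m => e (τ m))) : Multiset (Finset (Fin n))) =
      ↑((List.range c).map (fun m => e (m + b))) := by
  have h := coe_map_range b τ h1 h2
  have e1 : ((List.range c).map (fun m => e (τ m))) = ((List.range c).map τ).map e := by
    rw [List.map_map]; rfl
  have e2 : ((List.range c).map (fun m => e (m + b))) = ((List.range c).map (fun m => m + b)).map e := by
    rw [List.map_map]; rfl
  rw [e1, e2]
  exact congrArg (Multiset.map e) h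

lemma map_range_split {α : Type*} (g : ℕ → α) {t : ℕ} (ht : 1 ≤ t) :
    (List.range t).map g = (List.range (t - 1)).map g ++ [g (t - 1)] := by
  conv_lhs => rw [show t = t - 1 + 1 by omega]
  rw [List.range_succ, List.map_append]
  rfl

lemma range_shift_map {α : Type*} (g : ℕ → α) (c : ℕ) :
    (List.range (c + 1)).map g = g 0 :: (List.range c).map (fun m => g (m + 1)) := by
  rw [List.range_succ_eq_map, List.map_cons, List.map_map]
  rfl


lemma main_aux {n r t : ℕ} (E : Multiset (Finset (Fin n)))
    (hu : MUniform E r)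
    (hmax : ∀ s : ℕ, MHasBergePath E s → s ≤ t)
    (hcyc : ¬ MHasBergeCycle E t)
    (e : ℕ → Finset (Fin n)) (v : ℕ → Fin n)
    (he : (↑((List.range t).map fun i => e (i + 1)) : Multiset (Finset (Fin n))) ≤ E)
    (hvinj : Set.InjOn v (Set.Icc 1 (t - 1)))
    (hv1 : v 1 ∈ e 1) (hvt : v (t - 1) ∈ e t)
    (hvmid : ∀ i : ℕ, 2 ≤ i → i ≤ t - 1 → v (i - 1) ∈ e i ∧ v i ∈ e i)
    (htr : t + 1 ≤ r) :
    ∀ i : ℕ, 1 ≤ i → i ≤ t - 1 → v i ∈ e 1 →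
      edgeNbhd E (e i \ (Finset.Icc 1 (t - 1)).image v) ≤
        (↑((List.range (t - 1)).map fun i => e (i + 1)) : Multiset (Finset (Fin n))) := by
  intro i hi1 hit hvi
  have ht2 : 2 ≤ t := by omega
  set U : Finset (Fin n) := (Finset.Icc 1 (t - 1)).image v with hU
  set L1 : Multiset (Finset (Fin n)) := ↑((List.range (t - 1)).map fun i => e (i + 1)) with hL1
  by_contra hcon
  rw [Multiset.le_iff_count] at hcon
  push_neg at hcon
  obtain ⟨s, hs⟩ := hcon
  rw [edgeNbhd, Multiset.count_filter] at hs
  split_ifs at hs with hP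
  swap
  · omega
  -- hP : (s ∩ (e i \ U)).Nonempty, hs : count s L1 < count s E
  obtain ⟨w, hw⟩ := hP
  rw [Finset.mem_inter, Finset.mem_sdiff] at hw
  have hws : w ∈ s := hw.1
  have hwei : w ∈ e i := hw.2.1
  have hwU : w ∉ U := hw.2.2
  have hsE : s ∈ E := Multiset.count_pos.mp (by omega)
  have hscard : s.card = r := hu s hsE
  have hetE : e t ∈ E := by
    refine Multiset.mem_of_le he ?_
    rw [Multiset.mem_coe, List.mem_map]
    exact ⟨t - 1, by rw [List.mem_range]; omega, by rw [show t - 1 + 1 = t by omega]⟩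
  have hUcard : U.card ≤ t - 1 := by
    rw [hU]
    refine le_trans (Finset.card_image_le) ?_
    rw [Nat.card_Icc]
    omega
  -- basic index gadgets
  set σ : ℕ → ℕ := fun m => if m < i then i - m else m with hσ
  set τ : ℕ → ℕ := fun m => if m = 0 then i else if m < i - 1 then i - m
      else if m = i - 1 then 1 else m + 1 with hτ
  have hσa : ∀ m, m < i → σ m = i - m := by
    intro m h; simp only [hσ]; rw [if_pos h]
  have hσb : ∀ m, ¬ m < i → σ m = m := by
    intro m h; simp only [hσ]; rw [if_neg h]
  have hσr : ∀ m, 1 ≤ m → m ≤ t - 1 → 1 ≤ σ m ∧ σ m ≤ t - 1 := by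
    intro m h1 h2; simp only [hσ]; split <;> omega
  have hσinj : ∀ x, 1 ≤ x → x ≤ t - 1 → ∀ y, 1 ≤ y → y ≤ t - 1 → σ x = σ y → x = y := by
    intro x hx1 hx2 y hy1 hy2 hxy
    simp only [hσ] at hxy
    split_ifs at hxy <;> omega
  have hτa : τ 0 = i := by simp [hτ]
  have hτb : ∀ m, m ≠ 0 → m < i - 1 → τ m = i - m := by
    intro m h1 h2; simp only [hτ]; rw [if_neg h1, if_pos h2]
  have hτc : ∀ m, m ≠ 0 → m = i - 1 → τ m = 1 := by
    intro m h1 h2; simp only [hτ]; rw [if_neg h1, if_neg (by omega), if_pos h2]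
  have hτd : ∀ m, m ≠ 0 → ¬ m < i - 1 → m ≠ i - 1 → τ m = m + 1 := by
    intro m h1 h2 h3; simp only [hτ]; rw [if_neg h1, if_neg h2, if_neg h3]
  have hτr : ∀ m, m ≤ t - 2 → 1 ≤ τ m ∧ τ m ≤ t - 1 := by
    intro m h; simp only [hτ]; split_ifs <;> omega
  have hτinj : ∀ x, x < t - 1 → ∀ y, y < t - 1 → τ x = τ y → x = y := by
    intro x hx y hy hxy
    simp only [hτ] at hxy
    split_ifs at hxy <;> omega
  -- the rearranged path vertices
  set V : ℕ → Fin n := fun m => if m = 0 then w else v (σ m) with hV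
  have hV0 : V 0 = w := by simp [hV]
  have hVm : ∀ m, m ≠ 0 → V m = v (σ m) := by
    intro m h; simp only [hV]; rw [if_neg h]
  have hσU : ∀ m, 1 ≤ m → m ≤ t - 1 → v (σ m) ∈ U := by
    intro m h1 h2
    rw [hU]
    exact Finset.mem_image.mpr ⟨σ m, Finset.mem_Icc.mpr ⟨(hσr m h1 h2).1, (hσr m h1 h2).2⟩, rfl⟩
  have hVinj : ∀ a, a ≤ t - 1 → ∀ b, b ≤ t - 1 → V a = V b → a = b := by
    intro a ha b hb hab
    by_cases ha0 : a = 0 <;> by_cases hb0 : b = 0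
    · omega
    · exfalso
      rw [ha0, hV0, hVm b hb0] at hab
      have := hσU b (by omega) hb
      rw [← hab] at this
      exact hwU this
    · exfalso
      rw [hb0, hV0, hVm a ha0] at hab
      have := hσU a (by omega) ha
      rw [hab] at this
      exact hwU this
    · rw [hVm a ha0, hVm b hb0] at hab
      have h1 := hσr a (by omega) ha
      have h2 := hσr b (by omega) hb
      have := hvinj (Set.mem_Icc.mpr ⟨by exact_mod_cast h1.1, h1.2⟩)
        (Set.mem_Icc.mpr ⟨h2.1, h2.2⟩) hab
      exact hσinj a (by omega) ha b (by omega) hb this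
  -- adjacency of the rearranged path
  have hadjP6 : ∀ m, m ≤ t - 2 → V m ∈ e (τ m) ∧ V (m + 1) ∈ e (τ m) := by
    intro m hm
    by_cases h0 : m = 0
    · subst h0
      rw [hτa]
      constructor
      · rw [hV0]; exact hwei
      · rw [hVm 1 (by omega)]
        by_cases hi2 : 2 ≤ i
        · rw [hσa 1 (by omega)]
          exact (hvmid i hi2 hit).1
        · have hi1' : i = 1 := by omega
          rw [hσb 1 (by omega), show e i = e 1 from by rw [hi1']]
          exact hv1
    · have hm1 : 1 ≤ m := by omega
      rw [hVm m h0, hVm (m + 1) (by omega)]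
      by_cases hlt : m < i - 1
      · rw [hτb m h0 hlt, hσa m (by omega), hσa (m + 1) (by omega)]
        have h2im : 2 ≤ i - m := by omega
        have hmain := hvmid (i - m) h2im (by omega)
        refine ⟨hmain.2, ?_⟩
        rw [show i - (m + 1) = i - m - 1 by omega]
        exact hmain.1
      · by_cases heq : m = i - 1
        · have hi2 : 2 ≤ i := by omega
          rw [hτc m h0 heq, show m + 1 = i by omega, hσa m (by omega), hσb i (by omega)]
          rw [show i - m = 1 by omega]
          exact ⟨hv1, hvi⟩
        · have hge : i ≤ m := by omega
          rw [hτd m h0 hlt heq, hσb m (by omega), hσb (m + 1) (by omega)]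
          have hmain := hvmid (m + 1) (by omega) (by omega)
          refine ⟨?_, hmain.2⟩
          have := hmain.1
          rw [show m + 1 - 1 = m by omega] at this
          exact this
  -- multiset identities
  have hL' : (↑((List.range (t - 1)).map fun m => e (τ m)) : Multiset (Finset (Fin n))) = L1 := by
    rw [hL1]
    refine coe_map_range_e e 1 τ ?_ ?_
    · intro m hm
      have := hτr m (by omega)
      omega
    · intro x hx y hy hxy
      exact hτinj x hx y hy hxy
  have hLt_split : (↑((List.range t).map fun i => e (i + 1)) : Multiset (Finset (Fin n)))
      = L1 + {e t} := by
    rw [map_range_split (fun i => e (i + 1)) (by omega), hL1,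
      show t - 1 + 1 = t by omega, ← Multiset.coe_add, Multiset.coe_singleton]
  by_cases hwt : w ∈ e t
  · -- build a Berge cycle of length t
    refine absurd ?_ hcyc
    set C : ℕ → Finset (Fin n) := fun m => if m ≤ t - 2 then e (τ m) else e t with hC
    apply cycle_of_nat E t V C
    · intro a ha b hb
      exact hVinj a (by omega) b (by omega)
    · have hlistA : (List.range t).map C = (List.range (t - 1)).map (fun m => e (τ m)) ++ [e t] := by
        rw [map_range_split C (by omega)]
        congr 1
        · refine List.map_congr_left ?_
          intro m hm
          rw [List.mem_range] at hm
          simp only [hC]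
          rw [if_pos (by omega)]
        · simp only [hC]
          rw [if_neg (by omega)]
      have : (↑((List.range t).map C) : Multiset (Finset (Fin n))) = L1 + {e t} := by
        rw [hlistA, ← hL', ← Multiset.coe_add, Multiset.coe_singleton]
      rw [this, ← hLt_split]
      exact he
    · intro m hm
      by_cases h2 : m ≤ t - 2
      · have hCm : C m = e (τ m) := by simp only [hC]; rw [if_pos h2]
        rw [hCm, Nat.mod_eq_of_lt (by omega)]
        exact hadjP6 m h2
      · have hm' : m = t - 1 := by omega
        have hCm : C m = e t := by simp only [hC]; rw [if_neg h2]
        rw [hCm, hm']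
        constructor
        · rw [hVm (t - 1) (by omega), hσb (t - 1) (by omega)]
          exact hvt
        · rw [show t - 1 + 1 = t by omega, Nat.mod_self, hV0]
          exact hwt
  · -- build a Berge path of length t + 1
    have hsnet : s ≠ e t := fun h => hwt (h ▸ hws)
    -- pick u ∈ s new
    have hu1 : (s \ insert w U).Nonempty := by
      refine Finset.card_pos.mp ?_
      have h3 := Finset.le_card_sdiff (insert w U) s
      have h4 : (insert w U).card ≤ t := le_trans (Finset.card_insert_le _ _) (by omega)
      omega
    obtain ⟨u, hu'⟩ := hu1
    rw [Finset.mem_sdiff, Finset.mem_insert] at hu'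
    have hus : u ∈ s := hu'.1
    have huw : u ≠ w := fun h => hu'.2 (Or.inl h)
    have huU : u ∉ U := fun h => hu'.2 (Or.inr h)
    -- pick u' ∈ e t new
    have hu2 : (e t \ insert u U).Nonempty := by
      refine Finset.card_pos.mp ?_
      have h3 := Finset.le_card_sdiff (insert u U) (e t)
      have h4 : (insert u U).card ≤ t := le_trans (Finset.card_insert_le _ _) (by omega)
      have h5 : (e t).card = r := hu _ hetE
      omega
    obtain ⟨u', hup⟩ := hu2
    rw [Finset.mem_sdiff, Finset.mem_insert] at hup
    have huet : u' ∈ e t := hup.1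
    have huu' : u' ≠ u := fun h => hup.2 (Or.inl h)
    have hu'U : u' ∉ U := fun h => hup.2 (Or.inr h)
    have hu'w : u' ≠ w := fun h => hwt (h ▸ huet)
    have hVcases : ∀ m, m ≤ t - 1 → V m = w ∨ V m ∈ U := by
      intro m hm
      by_cases h : m = 0
      · left; rw [h, hV0]
      · right; rw [hVm m h]; exact hσU m (by omega) hm
    have hVne_u : ∀ m, m ≤ t - 1 → V m ≠ u := by
      intro m hm h
      rcases hVcases m hm with h' | h'
      · exact huw (h ▸ h')
      · exact huU (h ▸ h')
    have hVne_u' : ∀ m, m ≤ t - 1 → V m ≠ u' := by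
      intro m hm h
      rcases hVcases m hm with h' | h'
      · exact hu'w (h ▸ h')
      · exact hu'U (h ▸ h')
    set W : ℕ → Fin n := fun m => if m = 0 then u else if m ≤ t then V (m - 1) else u' with hW
    set G : ℕ → Finset (Fin n) := fun m => if m = 0 then s
        else if m ≤ t - 1 then e (τ (m - 1)) else e t with hG
    have hW0 : W 0 = u := by simp [hW]
    have hWm : ∀ m, 1 ≤ m → m ≤ t → W m = V (m - 1) := by
      intro m h1 h2; simp only [hW]; rw [if_neg (by omega), if_pos h2]
    have hWt1 : W (t + 1) = u' := by
      simp only [hW]; rw [if_neg (by omega), if_neg (by omega)]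
    have hG0 : G 0 = s := by simp [hG]
    have hinjB : ∀ a, a ≤ t + 1 → ∀ b, b ≤ t + 1 → W a = W b → a = b := by
      intro a ha b hb hab
      rcases show a = 0 ∨ (1 ≤ a ∧ a ≤ t) ∨ a = t + 1 by omega with rfl | hA | rfl <;>
        rcases show b = 0 ∨ (1 ≤ b ∧ b ≤ t) ∨ b = t + 1 by omega with rfl | hB | rfl
      · rfl
      · exfalso
        rw [hW0, hWm b hB.1 hB.2] at hab
        exact hVne_u (b - 1) (by omega) hab.symm
      · exfalso
        rw [hW0, hWt1] at hab
        exact huu' hab.symm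
      · exfalso
        rw [hW0, hWm a hA.1 hA.2] at hab
        exact hVne_u (a - 1) (by omega) hab
      · rw [hWm a hA.1 hA.2, hWm b hB.1 hB.2] at hab
        have := hVinj (a - 1) (by omega) (b - 1) (by omega) hab
        omega
      · exfalso
        rw [hWm a hA.1 hA.2, hWt1] at hab
        exact hVne_u' (a - 1) (by omega) hab
      · exfalso
        rw [hWt1, hW0] at hab
        exact huu' hab
      · exfalso
        rw [hWt1, hWm b hB.1 hB.2] at hab
        exact hVne_u' (b - 1) (by omega) hab.symm
      · rfl
    have hadjB : ∀ m, m < t + 1 → W m ∈ G m ∧ W (m + 1) ∈ G m := by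
      intro m hm
      by_cases h0 : m = 0
      · subst h0
        rw [hG0, hW0, show (0 : ℕ) + 1 = 1 by rfl, hWm 1 (by omega) (by omega), hV0]
        exact ⟨hus, hws⟩
      · by_cases hlast : m = t
        · have hGt : G t = e t := by simp only [hG]; rw [if_neg (by omega), if_neg (by omega)]
          rw [hlast, hGt, hWm t (by omega) le_rfl, hWt1, hVm (t - 1) (by omega), hσb (t - 1) (by omega)]
          exact ⟨hvt, huet⟩
        · have hGm : G m = e (τ (m - 1)) := by
            simp only [hG]; rw [if_neg h0, if_pos (by omega)]
          rw [hGm, hWm m (by omega) (by omega), hWm (m + 1) (by omega) (by omega),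
            show m + 1 - 1 = m by omega]
          have h6 := hadjP6 (m - 1) (by omega)
          rw [show m - 1 + 1 = m by omega] at h6
          exact h6
    have hlistB : (List.range (t + 1)).map G
        = s :: ((List.range (t - 1)).map (fun m => e (τ m)) ++ [e t]) := by
      rw [range_shift_map G t, hG0]
      congr 1
      rw [map_range_split (fun m => G (m + 1)) (by omega)]
      congr 1
      · refine List.map_congr_left ?_
        intro m hm
        rw [List.mem_range] at hm
        simp only [hG]
        rw [if_neg (by omega), if_pos (by omega), show m + 1 - 1 = m by omega]
      · simp only [hG]
        rw [show t - 1 + 1 = t by omega, if_neg (by omega), if_neg (by omega)]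
    have hmB : (↑((List.range (t + 1)).map G) : Multiset (Finset (Fin n)))
        = {s} + (L1 + {e t}) := by
      rw [hlistB, ← hL', ← Multiset.cons_coe, ← Multiset.coe_add, Multiset.coe_singleton,
        ← Multiset.singleton_add]
    have hleB : (↑((List.range (t + 1)).map G) : Multiset (Finset (Fin n))) ≤ E := by
      rw [Multiset.le_iff_count]
      intro f
      have hef := Multiset.le_iff_count.mp he f
      rw [hLt_split, Multiset.count_add, Multiset.count_singleton] at hef
      rw [hmB, Multiset.count_add, Multiset.count_add, Multiset.count_singleton,
        Multiset.count_singleton]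
      by_cases hfs : f = s
      · rw [if_pos hfs, if_neg (by rw [hfs]; exact hsnet)]
        rw [hfs]
        omega
      · rw [if_neg hfs]
        split_ifs at hef ⊢ <;> omega
    have := hmax (t + 1) (path_of_nat E (t + 1) W G hinjB hleB hadjB)
    omega


theorem stmt14    (n r k t : ℕ) (hk : 3 ≤ k) (hrk : k ≤ r) (hn : r < n)
    (E : Multiset (Finset (Fin n))) (hu : MUniform E r) (hc : MConnected E)
    (hf : MBPFree E k)
    (ht : MHasBergePath E t) (hmax : ∀ s : ℕ, MHasBergePath E s → s ≤ t)
    (hcyc : ¬ MHasBergeCycle E t)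
    (e : ℕ → Finset (Fin n)) (v : ℕ → Fin n)
    (he : (↑((List.range t).map fun i => e (i + 1)) : Multiset (Finset (Fin n))) ≤ E)
    (hvinj : Set.InjOn v (Set.Icc 1 (t - 1)))
    (hv1 : v 1 ∈ e 1) (hvt : v (t - 1) ∈ e t)
    (hvmid : ∀ i : ℕ, 2 ≤ i → i ≤ t - 1 → v (i - 1) ∈ e i ∧ v i ∈ e i)
 :
    (∀ i : ℕ, 1 ≤ i → i ≤ t - 1 → v i ∈ e 1 →
        edgeNbhd E (e i \ (Finset.Icc 1 (t - 1)).image v) ≤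
          (↑((List.range (t - 1)).map fun i => e (i + 1)) : Multiset (Finset (Fin n)))) ∧
    (∀ j : ℕ, 2 ≤ j → j ≤ t - 1 → v (j - 1) ∈ e t →
        edgeNbhd E (e j \ (Finset.Icc 1 (t - 1)).image v) ≤
          (↑((List.range (t - 1)).map fun i => e (i + 2)) : Multiset (Finset (Fin n)))) := by
  have htk : t < k := by
    by_contra h
    push_neg at h
    exact hf (path_trunc E h ht)
  have htr : t + 1 ≤ r := by omega
  constructor
  · exact main_aux E hu hmax hcyc e v he hvinj hv1 hvt hvmid htr
  · intro j hj2 hjt hvj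
    have ht3 : 3 ≤ t := by omega
    have he' : (↑((List.range t).map fun m => e (t + 1 - (m + 1))) : Multiset (Finset (Fin n))) ≤ E := by
      have h := coe_map_range_e e 1 (c := t) (fun m => t + 1 - (m + 1))
        (by intro m hm; omega) (by intro x hx y hy hxy; omega)
      rw [h]
      exact he
    have hvinj' : Set.InjOn (fun m => v (t - m)) (Set.Icc 1 (t - 1)) := by
      intro a ha b hb hab
      simp only [Set.mem_Icc] at ha hb
      simp only [] at hab
      have := hvinj (Set.mem_Icc.mpr ⟨by omega, by omega⟩)
        (Set.mem_Icc.mpr ⟨by omega, by omega⟩) hab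
      omega
    have hv1' : v (t - 1) ∈ e (t + 1 - 1) := by
      rw [show t + 1 - 1 = t by omega]; exact hvt
    have hvt' : v (t - (t - 1)) ∈ e (t + 1 - t) := by
      rw [show t - (t - 1) = 1 by omega, show t + 1 - t = 1 by omega]; exact hv1
    have hvmid' : ∀ i : ℕ, 2 ≤ i → i ≤ t - 1 →
        v (t - (i - 1)) ∈ e (t + 1 - i) ∧ v (t - i) ∈ e (t + 1 - i) := by
      intro i h2 h3
      have h := hvmid (t + 1 - i) (by omega) (by omega)
      rw [show t + 1 - i - 1 = t - i by omega] at h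
      exact ⟨by rw [show t - (i - 1) = t + 1 - i by omega]; exact h.2, h.1⟩
    have hvj' : v (t - (t + 1 - j)) ∈ e (t + 1 - 1) := by
      rw [show t - (t + 1 - j) = j - 1 by omega, show t + 1 - 1 = t by omega]
      exact hvj
    have hres := main_aux E hu hmax hcyc (fun m => e (t + 1 - m)) (fun m => v (t - m))
      he' hvinj' hv1' hvt' hvmid' htr (t + 1 - j) (by omega) (by omega) hvj'
    have himg : (Finset.Icc 1 (t - 1)).image (fun m => v (t - m))
        = (Finset.Icc 1 (t - 1)).image v := by
      ext x
      simp only [Finset.mem_image, Finset.mem_Icc]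
      constructor
      · rintro ⟨m, hm, rfl⟩
        exact ⟨t - m, ⟨by omega, by omega⟩, rfl⟩
      · rintro ⟨m, hm, rfl⟩
        exact ⟨t - m, ⟨by omega, by omega⟩, by rw [show t - (t - m) = m by omega]⟩
    have hej : e (t + 1 - (t + 1 - j)) = e j := by rw [show t + 1 - (t + 1 - j) = j by omega]
    have hlist2 : (↑((List.range (t - 1)).map fun m => e (t + 1 - (m + 1))) : Multiset (Finset (Fin n)))
        = ↑((List.range (t - 1)).map fun m => e (m + 2)) :=
      coe_map_range_e e 2 (c := t - 1) (fun m => t + 1 - (m + 1))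
        (by intro m hm; omega) (by intro x hx y hy hxy; omega)
    rw [hej, himg, hlist2] at hres
    exact hres


end BergeM
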